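/- arXiv:2303.07664 — 3 statements merged into one kernel-verified Lean document; each statement's English description precedes it below -/
import Mathlib

section
/- Even-part decomposition of a generalized hypergeometric series: let q ≥ 0 be an integer, let a₁,…,a_{q+1} be real numbers, let b₁,…,b_q be positive real numbers, and let z be a real number with |z| < 1. Then ∑_{n≥0} ((a₁)ₙ⋯(a_{q+1})ₙ)/((b₁)ₙ⋯(b_q)ₙ) · zⁿ/n! + ∑_{n≥0} ((a₁)ₙ⋯(a_{q+1})ₙ)/((b₁)ₙ⋯(b_q)ₙ) · (−z)ⁿ/n! = 2·∑_{n≥0} [∏_{j=1}^{q+1} (a_j/2)ₙ·(a_j/2+1/2)ₙ] / [(1/2)ₙ·∏_{k=1}^{q} (b_k/2)ₙ·(b_k/2+1/2)ₙ] · (z²)ⁿ/n!. -/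
open Real

/-- The Pochhammer symbol (shifted factorial) `(a)ₙ` for a real number `a`. -/
noncomputable def poch (a : ℝ) (n : ℕ) : ℝ := Polynomial.eval a (ascPochhammer ℝ n)

lemma poch_zero (a : ℝ) : poch a 0 = 1 := by simp [poch]

lemma poch_succ (a : ℝ) (n : ℕ) : poch a (n+1) = poch a n * (a + n) := by
  simp [poch, ascPochhammer_succ_right]

lemma poch_pos {a : ℝ} (ha : 0 < a) (n : ℕ) : 0 < poch a n := by
  induction n with
  | zero => simp [poch_zero]
  | succ n ih => rw [poch_succ]; positivity

lemma poch_two_mul (a : ℝ) (m : ℕ) :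
    poch a (2*m) = 4^m * poch (a/2) m * poch (a/2 + 1/2) m := by
  induction m with
  | zero => simp [poch_zero]
  | succ m ih =>
    have h2 : 2*(m+1) = (2*m) + 1 + 1 := by ring
    rw [h2, poch_succ, poch_succ, ih, poch_succ, poch_succ]
    push_cast
    ring

lemma factorial_two_mul (m : ℕ) :
    ((2*m).factorial : ℝ) = 4^m * m.factorial * poch (1/2) m := by
  induction m with
  | zero => simp [poch_zero]
  | succ m ih =>
    have h2 : 2*(m+1) = (2*m) + 1 + 1 := by ring
    rw [h2, Nat.factorial_succ, Nat.factorial_succ, Nat.factorial_succ, poch_succ]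
    push_cast [ih]
    ring

open Filter in
lemma ratio_tendsto (a : ℝ) : Tendsto (fun n : ℕ => (a + n)/(n+1)) atTop (nhds 1) := by
  have h1 : Tendsto (fun n : ℕ => ((n:ℝ)+1)) atTop atTop :=
    tendsto_atTop_add_const_right _ 1 tendsto_natCast_atTop_atTop
  have h0 : Tendsto (fun n : ℕ => ((n:ℝ)+1)⁻¹) atTop (nhds 0) := h1.inv_tendsto_atTop
  have h := (h0.const_mul (a-1)).add_const 1
  rw [mul_zero, zero_add] at h
  refine h.congr fun n => ?_
  have : ((n:ℝ)+1) ≠ 0 := by positivity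
  field_simp
  ring

open Filter in
lemma summable_hyp (q : ℕ) (a : Fin (q + 1) → ℝ) (b : Fin q → ℝ)
    (hb : ∀ k, 0 < b k) (z : ℝ) (hz : |z| < 1) :
    Summable (fun n : ℕ =>
      (∏ j, poch (a j) n) / ((∏ k, poch (b k) n) * (n.factorial : ℝ)) * z^n) := by
  set f : ℕ → ℝ := fun n =>
      (∏ j, poch (a j) n) / ((∏ k, poch (b k) n) * (n.factorial : ℝ)) * z^n with hf
  set ratio : ℕ → ℝ := fun n =>
      (∏ j, (a j + n)) * z / ((∏ k, (b k + n)) * (n+1)) with hratio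
  have hstep : ∀ n : ℕ, f (n+1) = f n * ratio n := by
    intro n
    have hn1 : ((n:ℝ)+1) ≠ 0 := by positivity
    have hfac : ((n.factorial : ℝ)) ≠ 0 := by positivity
    have hPb : (∏ k, poch (b k) n) ≠ 0 :=
      Finset.prod_ne_zero_iff.2 fun k _ => (poch_pos (hb k) n).ne'
    have hBn : (∏ k : Fin q, (b k + (n:ℝ))) ≠ 0 :=
      Finset.prod_ne_zero_iff.2 fun k _ => by have := hb k; positivity
    simp only [hf, hratio, poch_succ, Nat.factorial_succ]
    push_cast
    rw [Finset.prod_mul_distrib, Finset.prod_mul_distrib]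
    field_simp
    ring
  have htend : Tendsto ratio atTop (nhds z) := by
    have hnum : Tendsto (fun n : ℕ => z * ∏ j, (a j + n)/(n+1)) atTop (nhds (z * 1)) := by
      refine Tendsto.const_mul z ?_
      have := tendsto_finset_prod (Finset.univ : Finset (Fin (q+1)))
        (fun j (_ : j ∈ Finset.univ) => ratio_tendsto (a j))
      simpa using this
    have hden : Tendsto (fun n : ℕ => ∏ k, (b k + n)/(n+1)) atTop (nhds 1) := by
      have := tendsto_finset_prod (Finset.univ : Finset (Fin q))
        (fun k (_ : k ∈ Finset.univ) => ratio_tendsto (b k))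
      simpa using this
    have h := hnum.div hden one_ne_zero
    rw [mul_one, div_one] at h
    refine h.congr fun n => ?_
    have hn1 : ((n:ℝ)+1) ≠ 0 := by positivity
    have hBn : (∏ k : Fin q, (b k + (n:ℝ))) ≠ 0 :=
      Finset.prod_ne_zero_iff.2 fun k _ => by have := hb k; positivity
    simp only [Pi.div_apply, hratio]
    rw [Finset.prod_div_distrib, Finset.prod_div_distrib, Finset.prod_const,
      Finset.prod_const]
    simp only [Finset.card_univ, Fintype.card_fin]
    field_simp
    ring
  set r : ℝ := (1 + |z|)/2 with hr
  have hr1 : r < 1 := by rw [hr]; linarith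
  have hzr : |z| < r := by rw [hr]; linarith
  apply summable_of_ratio_norm_eventually_le hr1
  have habs : Tendsto (fun n => |ratio n|) atTop (nhds |z|) := htend.abs
  filter_upwards [habs.eventually_lt_const hzr] with n hn
  rw [hstep n, Real.norm_eq_abs, Real.norm_eq_abs, abs_mul, mul_comm (|f n|)]
  exact mul_le_mul_of_nonneg_right hn.le (abs_nonneg _)

set_option maxHeartbeats 1000000 in
/-- Even-part decomposition of a generalized hypergeometric series
`₍q+1₎F_q(a₁,…,a_{q+1}; b₁,…,b_q; z)`. -/
theorem even_part_decomposition (q : ℕ) (a : Fin (q + 1) → ℝ) (b : Fin q → ℝ)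
    (hb : ∀ k, 0 < b k) (z : ℝ) (hz : |z| < 1) :
    (∑' n : ℕ, (∏ j, poch (a j) n) / ((∏ k, poch (b k) n) * (n.factorial : ℝ)) * z^n)
      + (∑' n : ℕ, (∏ j, poch (a j) n) / ((∏ k, poch (b k) n) * (n.factorial : ℝ)) * (-z)^n)
      = 2 * ∑' n : ℕ,
          (∏ j, poch (a j / 2) n * poch (a j / 2 + 1/2) n) /
            (poch (1/2) n * (∏ k, poch (b k / 2) n * poch (b k / 2 + 1/2) n) *
              (n.factorial : ℝ)) * (z^2)^n := by
  set c : ℕ → ℝ := fun n =>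
    (∏ j, poch (a j) n) / ((∏ k, poch (b k) n) * (n.factorial : ℝ)) with hc
  have S1 := summable_hyp q a b hb z hz
  have S2 := summable_hyp q a b hb (-z) (by rwa [abs_neg])
  rw [← Summable.tsum_add S1 S2]
  set F : ℕ → ℝ := fun n => c n * z^n + c n * (-z)^n with hF
  have hinj : Function.Injective (fun m : ℕ => 2 * m) := fun x y h => by dsimp only at h; omega
  have hsupp : Function.support F ⊆ Set.range (fun m : ℕ => 2 * m) := by
    intro n hn
    by_contra hr
    apply hn
    have hodd : Odd n := by
      rcases Nat.even_or_odd n with he | ho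
      · obtain ⟨r, hrr⟩ := he
        exact absurd ⟨r, show 2 * r = n by omega⟩ hr
      · exact ho
    simp only [hF, hodd.neg_pow]
    ring
  rw [← hinj.tsum_eq hsupp]
  have hterm : ∀ m : ℕ, F (2 * m) = 2 *
      ((∏ j, poch (a j / 2) m * poch (a j / 2 + 1/2) m) /
        (poch (1/2) m * (∏ k, poch (b k / 2) m * poch (b k / 2 + 1/2) m) *
          (m.factorial : ℝ)) * (z^2)^m) := by
    intro m
    have hev : Even (2 * m) := ⟨m, by ring⟩
    have hH : poch (1/2 : ℝ) m ≠ 0 := (poch_pos (by norm_num) m).ne'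
    have hfac : ((m.factorial : ℝ)) ≠ 0 := by positivity
    have hR : (∏ k, poch (b k / 2) m) ≠ 0 :=
      Finset.prod_ne_zero_iff.2 fun k _ =>
        (poch_pos (by have := hb k; linarith : (0:ℝ) < b k / 2) m).ne'
    have hS : (∏ k, poch (b k / 2 + 1/2) m) ≠ 0 :=
      Finset.prod_ne_zero_iff.2 fun k _ =>
        (poch_pos (by have := hb k; linarith : (0:ℝ) < b k / 2 + 1/2) m).ne'
    simp only [hF, hc, hev.neg_pow]
    rw [pow_mul]
    simp only [poch_two_mul, factorial_two_mul, Finset.prod_mul_distrib,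
      Finset.prod_const, Finset.card_univ, Fintype.card_fin]
    set t := (4:ℝ)^m with hteq
    set P := ∏ j, poch (a j / 2) m with hP
    set Q := ∏ j, poch (a j / 2 + 1/2) m with hQ
    set R := ∏ k, poch (b k / 2) m with hRd
    set S := ∏ k, poch (b k / 2 + 1/2) m with hSd
    set H := poch (1/2 : ℝ) m with hHd
    have ht : t ≠ 0 := by rw [hteq]; positivity
    have htq : t ^ q ≠ 0 := pow_ne_zero _ ht
    rw [pow_succ]
    field_simp
    ring
  rw [tsum_congr hterm, tsum_mul_left]
end

section
/- The maximum value of the Clausen function satisfies Cl₂(π/3) = (1/(2√3))·(ψ′(1/3) − 2π²/3), where ψ′(1/3) = 9·∑_{k≥0} 1/(3k+1)². Concretely, ∑_{n≥1} sin(nπ/3)/n² = (1/(2√3))·(9·∑_{k≥0} 1/(3k+1)² − 2π²/3). -/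
open Real

lemma hbase_sum : HasSum (fun k : ℕ => 1 / ((k : ℝ) + 1) ^ 2) (π ^ 2 / 6) := by
  have h : HasSum (fun n : ℕ => (1:ℝ) / ((n + 1 : ℕ) : ℝ) ^ 2) (π ^ 2 / 6) := by
    rw [hasSum_nat_add_iff (f := fun n : ℕ => (1:ℝ) / (n:ℝ)^2) 1]
    simpa using hasSum_zeta_two
  convert h using 2 with k
  push_cast
  ring

lemma summable_res (d r : ℝ) (hd : 1 ≤ d) (hr : 1 ≤ r) :
    Summable (fun k : ℕ => 1 / (d * k + r) ^ 2) := by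
  refine Summable.of_nonneg_of_le (fun k => by positivity) (fun k => ?_) hbase_sum.summable
  have h1 : ((k : ℝ) + 1) ≤ d * k + r := by
    nlinarith [Nat.cast_nonneg (α := ℝ) k]
  have h2 : ((k : ℝ) + 1) ^ 2 ≤ (d * k + r) ^ 2 := by
    apply pow_le_pow_left₀ (by positivity) h1
  exact one_div_le_one_div_of_le (by positivity) h2

lemma tsum_mod (d : ℕ) [NeZero d] (f : ℕ → ℝ) (hf : Summable f) :
    ∑' n, f n = ∑ r : Fin d, ∑' k : ℕ, f (d * k + r) := by
  let e : Fin d × ℕ ≃ ℕ := ((Nat.divModEquiv d).trans (Equiv.prodComm ℕ (Fin d))).symm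
  have h1 : ∑' n, f n = ∑' p : Fin d × ℕ, f (e p) := (Equiv.tsum_eq e f).symm
  rw [h1, Summable.tsum_prod (f := fun p : Fin d × ℕ => f (e p)) (hf.comp_injective e.injective),
    tsum_fintype]
  refine Finset.sum_congr rfl fun r _ => ?_
  congr 1
  ext k
  have : e (r, k) = k * d + r := rfl
  rw [this, mul_comm]

set_option maxHeartbeats 1000000 in
/-- `Cl₂(π/3) = (1/(2√3))·(ψ′(1/3) − 2π²/3)`, where
`Cl₂(π/3) = ∑_{n≥1} sin(nπ/3)/n²` and `ψ′(1/3) = 9·∑_{k≥0} 1/(3k+1)²`. -/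
theorem clausen_pi_div_three :
    (∑' n : ℕ, Real.sin (((n : ℝ) + 1) * π / 3) / ((n : ℝ) + 1)^2)
      = (1 / (2 * Real.sqrt 3)) *
          (9 * (∑' k : ℕ, 1 / (3 * (k : ℝ) + 1)^2) - 2 * π^2 / 3) := by
  -- abbreviations
  set A : ℝ := ∑' k : ℕ, 1 / (3 * (k : ℝ) + 1)^2 with hA
  set B : ℝ := ∑' k : ℕ, 1 / (3 * (k : ℝ) + 2)^2 with hB
  set Q1 : ℝ := ∑' k : ℕ, 1 / (6 * (k : ℝ) + 1)^2 with hQ1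
  set Q2 : ℝ := ∑' k : ℕ, 1 / (6 * (k : ℝ) + 2)^2 with hQ2
  set Q4 : ℝ := ∑' k : ℕ, 1 / (6 * (k : ℝ) + 4)^2 with hQ4
  set Q5 : ℝ := ∑' k : ℕ, 1 / (6 * (k : ℝ) + 5)^2 with hQ5
  have sA : Summable (fun k : ℕ => 1 / (3 * (k:ℝ) + 1)^2) :=
    summable_res 3 1 (by norm_num) (by norm_num)
  have sB : Summable (fun k : ℕ => 1 / (3 * (k:ℝ) + 2)^2) :=
    summable_res 3 2 (by norm_num) (by norm_num)
  -- (1) splitting the Basel sum mod 3 : π²/6 = A + B + π²/54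
  have split3 : π ^ 2 / 6 = A + B + π ^ 2 / 54 := by
    have h := tsum_mod 3 (fun n : ℕ => 1 / ((n:ℝ) + 1)^2) hbase_sum.summable
    rw [hbase_sum.tsum_eq, Fin.sum_univ_three] at h
    have e0 : ∑' k : ℕ, (1 : ℝ) / (((3 * k + (0 : Fin 3) : ℕ) : ℝ) + 1)^2 = A := by
      rw [hA]; apply tsum_congr; intro k; rw [show ((0 : Fin 3) : ℕ) = 0 from rfl]; push_cast; congr 1; ring
    have e1 : ∑' k : ℕ, (1 : ℝ) / (((3 * k + (1 : Fin 3) : ℕ) : ℝ) + 1)^2 = B := by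
      rw [hB]; apply tsum_congr; intro k; rw [show ((1 : Fin 3) : ℕ) = 1 from rfl]; push_cast; congr 1; ring
    have e2 : ∑' k : ℕ, (1 : ℝ) / (((3 * k + (2 : Fin 3) : ℕ) : ℝ) + 1)^2 = π ^ 2 / 54 := by
      have : (fun k : ℕ => (1 : ℝ) / (((3 * k + (2 : Fin 3) : ℕ) : ℝ) + 1)^2)
          = fun k : ℕ => (1 / 9) * (1 / ((k:ℝ) + 1)^2) := by
        funext k; rw [show ((2 : Fin 3) : ℕ) = 2 from rfl]; push_cast; field_simp; ring
      rw [this, tsum_mul_left, hbase_sum.tsum_eq]; ring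
    rw [e0, e1, e2] at h
    exact h
  -- (2) parity splits
  have splitA : A = Q1 + Q4 := by
    have h := tsum_mod 2 (fun k : ℕ => 1 / (3 * (k:ℝ) + 1)^2) sA
    rw [Fin.sum_univ_two] at h
    have e0 : ∑' k : ℕ, (1:ℝ) / (3 * ((2 * k + (0 : Fin 2) : ℕ) : ℝ) + 1)^2 = Q1 := by
      rw [hQ1]; apply tsum_congr; intro k; rw [show ((0 : Fin 2) : ℕ) = 0 from rfl]; push_cast; congr 1; ring
    have e1 : ∑' k : ℕ, (1:ℝ) / (3 * ((2 * k + (1 : Fin 2) : ℕ) : ℝ) + 1)^2 = Q4 := by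
      rw [hQ4]; apply tsum_congr; intro k; rw [show ((1 : Fin 2) : ℕ) = 1 from rfl]; push_cast; congr 1; ring
    rw [e0, e1] at h
    rw [hA]; exact h
  have splitB : B = Q2 + Q5 := by
    have h := tsum_mod 2 (fun k : ℕ => 1 / (3 * (k:ℝ) + 2)^2) sB
    rw [Fin.sum_univ_two] at h
    have e0 : ∑' k : ℕ, (1:ℝ) / (3 * ((2 * k + (0 : Fin 2) : ℕ) : ℝ) + 2)^2 = Q2 := by
      rw [hQ2]; apply tsum_congr; intro k; rw [show ((0 : Fin 2) : ℕ) = 0 from rfl]; push_cast; congr 1; ring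
    have e1 : ∑' k : ℕ, (1:ℝ) / (3 * ((2 * k + (1 : Fin 2) : ℕ) : ℝ) + 2)^2 = Q5 := by
      rw [hQ5]; apply tsum_congr; intro k; rw [show ((1 : Fin 2) : ℕ) = 1 from rfl]; push_cast; congr 1; ring
    rw [e0, e1] at h
    rw [hB]; exact h
  -- (3) scaling relations
  have scaleQ2 : Q2 = A / 4 := by
    have : (fun k : ℕ => 1 / (6 * (k:ℝ) + 2)^2)
        = fun k : ℕ => (1/4) * (1 / (3 * (k:ℝ) + 1)^2) := by
      funext k; field_simp; ring
    rw [hQ2, this, tsum_mul_left, ← hA]; ring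
  have scaleQ4 : Q4 = B / 4 := by
    have : (fun k : ℕ => 1 / (6 * (k:ℝ) + 4)^2)
        = fun k : ℕ => (1/4) * (1 / (3 * (k:ℝ) + 2)^2) := by
      funext k; field_simp; ring
    rw [hQ4, this, tsum_mul_left, ← hB]; ring
  -- (4) split the main sum mod 6
  have hFsum : Summable (fun n : ℕ => Real.sin (((n : ℝ) + 1) * π / 3) / ((n : ℝ) + 1)^2) := by
    refine Summable.of_abs ?_
    refine Summable.of_nonneg_of_le (fun n => abs_nonneg _) (fun n => ?_) hbase_sum.summable
    rw [abs_div, abs_of_nonneg (by positivity : (0:ℝ) ≤ ((n:ℝ)+1)^2)]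
    gcongr
    exact abs_sin_le_one _
  have hsin : ∀ (k r : ℕ), Real.sin ((((6 * k + r : ℕ) : ℝ) + 1) * π / 3)
      = Real.sin (((r : ℝ) + 1) * π / 3) := by
    intro k r
    have : ((((6 * k + r : ℕ) : ℝ)) + 1) * π / 3 = ((r : ℝ) + 1) * π / 3 + (k : ℝ) * (2 * π) := by
      push_cast; ring
    rw [this, Real.sin_add_nat_mul_two_pi]
  have hmain := tsum_mod 6 (fun n : ℕ => Real.sin (((n : ℝ) + 1) * π / 3) / ((n : ℝ) + 1)^2) hFsum
  rw [Fin.sum_univ_six] at hmain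
  -- sine values
  have s3 : Real.sin (π / 3) = Real.sqrt 3 / 2 := Real.sin_pi_div_three
  have v0 : Real.sin (((0:ℝ) + 1) * π / 3) = Real.sqrt 3 / 2 := by
    rw [show ((0:ℝ) + 1) * π / 3 = π / 3 by ring, s3]
  have v1 : Real.sin (((1:ℝ) + 1) * π / 3) = Real.sqrt 3 / 2 := by
    rw [show ((1:ℝ) + 1) * π / 3 = π - π / 3 by ring, Real.sin_pi_sub, s3]
  have v2 : Real.sin (((2:ℝ) + 1) * π / 3) = 0 := by
    rw [show ((2:ℝ) + 1) * π / 3 = π by ring, Real.sin_pi]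
  have v3 : Real.sin (((3:ℝ) + 1) * π / 3) = -(Real.sqrt 3 / 2) := by
    rw [show ((3:ℝ) + 1) * π / 3 = π / 3 + π by ring, Real.sin_add_pi, s3]
  have v4 : Real.sin (((4:ℝ) + 1) * π / 3) = -(Real.sqrt 3 / 2) := by
    rw [show ((4:ℝ) + 1) * π / 3 = -(π/3) + (1:ℕ) * (2 * π) by push_cast; ring,
      Real.sin_add_nat_mul_two_pi, Real.sin_neg, s3]
  have v5 : Real.sin (((5:ℝ) + 1) * π / 3) = 0 := by
    rw [show ((5:ℝ) + 1) * π / 3 = 2 * π by ring, Real.sin_two_pi]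
  -- evaluate each residue class
  have t0 : ∑' k : ℕ, Real.sin ((((6 * k + ((0 : Fin 6) : ℕ) : ℕ) : ℝ) + 1) * π / 3)
      / (((6 * k + ((0 : Fin 6) : ℕ) : ℕ) : ℝ) + 1)^2 = Real.sqrt 3 / 2 * Q1 := by
    rw [hQ1, ← tsum_mul_left]
    apply tsum_congr; intro k
    rw [show ((0 : Fin 6) : ℕ) = 0 from rfl, hsin k 0]
    rw [show (((0:ℕ):ℝ) + 1) * π / 3 = ((0:ℝ) + 1) * π / 3 by norm_num, v0]
    push_cast
    field_simp
    try ring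
  have t1 : ∑' k : ℕ, Real.sin ((((6 * k + ((1 : Fin 6) : ℕ) : ℕ) : ℝ) + 1) * π / 3)
      / (((6 * k + ((1 : Fin 6) : ℕ) : ℕ) : ℝ) + 1)^2 = Real.sqrt 3 / 2 * Q2 := by
    rw [hQ2, ← tsum_mul_left]
    apply tsum_congr; intro k
    rw [show ((1 : Fin 6) : ℕ) = 1 from rfl, hsin k 1]
    rw [show (((1:ℕ):ℝ) + 1) * π / 3 = ((1:ℝ) + 1) * π / 3 by norm_num, v1]
    push_cast
    field_simp
    try ring
  have t2 : ∑' k : ℕ, Real.sin ((((6 * k + ((2 : Fin 6) : ℕ) : ℕ) : ℝ) + 1) * π / 3)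
      / (((6 * k + ((2 : Fin 6) : ℕ) : ℕ) : ℝ) + 1)^2 = 0 := by
    have hz : ∀ k : ℕ, Real.sin ((((6 * k + ((2 : Fin 6) : ℕ) : ℕ) : ℝ) + 1) * π / 3)
        / (((6 * k + ((2 : Fin 6) : ℕ) : ℕ) : ℝ) + 1)^2 = 0 := by
      intro k
      rw [show ((2 : Fin 6) : ℕ) = 2 from rfl, hsin k 2]
      rw [show (((2:ℕ):ℝ) + 1) * π / 3 = ((2:ℝ) + 1) * π / 3 by norm_num, v2, zero_div]
    rw [tsum_congr hz, tsum_zero]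
  have t3 : ∑' k : ℕ, Real.sin ((((6 * k + ((3 : Fin 6) : ℕ) : ℕ) : ℝ) + 1) * π / 3)
      / (((6 * k + ((3 : Fin 6) : ℕ) : ℕ) : ℝ) + 1)^2 = -(Real.sqrt 3 / 2) * Q4 := by
    rw [hQ4, ← tsum_mul_left]
    apply tsum_congr; intro k
    rw [show ((3 : Fin 6) : ℕ) = 3 from rfl, hsin k 3]
    rw [show (((3:ℕ):ℝ) + 1) * π / 3 = ((3:ℝ) + 1) * π / 3 by norm_num, v3]
    push_cast
    field_simp
    try ring
  have t4 : ∑' k : ℕ, Real.sin ((((6 * k + ((4 : Fin 6) : ℕ) : ℕ) : ℝ) + 1) * π / 3)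
      / (((6 * k + ((4 : Fin 6) : ℕ) : ℕ) : ℝ) + 1)^2 = -(Real.sqrt 3 / 2) * Q5 := by
    rw [hQ5, ← tsum_mul_left]
    apply tsum_congr; intro k
    rw [show ((4 : Fin 6) : ℕ) = 4 from rfl, hsin k 4]
    rw [show (((4:ℕ):ℝ) + 1) * π / 3 = ((4:ℝ) + 1) * π / 3 by norm_num, v4]
    push_cast
    field_simp
    try ring
  have t5 : ∑' k : ℕ, Real.sin ((((6 * k + ((5 : Fin 6) : ℕ) : ℕ) : ℝ) + 1) * π / 3)
      / (((6 * k + ((5 : Fin 6) : ℕ) : ℕ) : ℝ) + 1)^2 = 0 := by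
    have hz : ∀ k : ℕ, Real.sin ((((6 * k + ((5 : Fin 6) : ℕ) : ℕ) : ℝ) + 1) * π / 3)
        / (((6 * k + ((5 : Fin 6) : ℕ) : ℕ) : ℝ) + 1)^2 = 0 := by
      intro k
      rw [show ((5 : Fin 6) : ℕ) = 5 from rfl, hsin k 5]
      rw [show (((5:ℕ):ℝ) + 1) * π / 3 = ((5:ℝ) + 1) * π / 3 by norm_num, v5, zero_div]
    rw [tsum_congr hz, tsum_zero]
  rw [t0, t1, t2, t3, t4, t5] at hmain
  rw [hmain]
  -- final algebra
  have hs : Real.sqrt 3 ^ 2 = 3 := Real.sq_sqrt (by norm_num)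
  have hs0 : (0:ℝ) < Real.sqrt 3 := Real.sqrt_pos.mpr (by norm_num)
  have hQ1' : Q1 = A - B / 4 := by rw [scaleQ4] at splitA; linarith
  have hQ5' : Q5 = B - A / 4 := by rw [scaleQ2] at splitB; linarith
  have hB' : B = 4 * π ^ 2 / 27 - A := by linarith
  have hinv : 1 / (2 * Real.sqrt 3) = Real.sqrt 3 / 6 := by
    have hm : Real.sqrt 3 * Real.sqrt 3 = 3 := Real.mul_self_sqrt (by norm_num)
    rw [div_eq_div_iff (by positivity) (by norm_num)]
    nlinarith [hm]
  rw [hinv, hQ1', scaleQ2, scaleQ4, hQ5', hB']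
  ring
end

section
/- Ramanujan's odd-harmonic sum evaluation at x = 1/√5: the sum ∑_{k≥1} h_k·(1/√5)^{2k−1}/(2k−1) equals π²/20, where h_k = ∑_{j=1}^{k} 1/(2j−1) is the k-th odd harmonic number. Equivalently, 2·∑_{k≥1} h_k·5^{−k+1/2}/(2k−1) = π²/10. -/
open Real

/-- The `k`-th odd harmonic number `h_k = ∑_{j=1}^k 1/(2j−1)`, with `h₀ = 0`. -/
noncomputable def oddHarmonic (k : ℕ) : ℝ := ∑ j ∈ Finset.range k, 1 / (2 * (j : ℝ) + 1)

open Filter Set Topology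

/-- The real dilogarithm on `[-1,1]`, as a power series. -/
noncomputable def Li2 (x : ℝ) : ℝ := ∑' n : ℕ, x ^ (n + 1) / ((n : ℝ) + 1) ^ 2

lemma summable_li2 {x : ℝ} (h : |x| ≤ 1) :
    Summable (fun n : ℕ => x ^ (n + 1) / ((n : ℝ) + 1) ^ 2) := by
  have hs : Summable (fun n : ℕ => 1 / ((n : ℝ) + 1) ^ 2) := by
    have := Real.summable_one_div_nat_pow.mpr (le_refl 2)
    simpa using (summable_nat_add_iff 1).mpr this
  refine Summable.of_norm_bounded hs (fun n => ?_)
  have h1 : |x| ^ (n + 1) ≤ 1 := pow_le_one₀ (abs_nonneg x) h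
  have h2 : (0:ℝ) < ((n : ℝ) + 1) ^ 2 := by positivity
  rw [norm_eq_abs, abs_div, abs_pow, abs_of_pos h2, div_le_div_iff₀ h2 h2]
  nlinarith [pow_nonneg (abs_nonneg x) (n+1)]

lemma hasSum_li2 {x : ℝ} (h : |x| ≤ 1) :
    HasSum (fun n : ℕ => x ^ (n + 1) / ((n : ℝ) + 1) ^ 2) (Li2 x) :=
  (summable_li2 h).hasSum

lemma li2_zero : Li2 0 = 0 := by
  simp [Li2]

lemma summable_li2_deriv {x : ℝ} (hx : |x| < 1) :
    Summable (fun n : ℕ => x ^ n / ((n : ℝ) + 1)) := by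
  refine Summable.of_norm_bounded (summable_geometric_of_lt_one (abs_nonneg x) hx) (fun n => ?_)
  rw [norm_eq_abs, abs_div, abs_pow]
  have h2 : (0:ℝ) < (n : ℝ) + 1 := by positivity
  rw [abs_of_pos h2]
  calc |x| ^ n / ((n:ℝ) + 1) ≤ |x| ^ n / 1 := by
        apply div_le_div_of_nonneg_left (pow_nonneg (abs_nonneg x) n) one_pos
        linarith [Nat.cast_nonneg (α := ℝ) n]
    _ = |x| ^ n := by ring

lemma hasSum_li2_deriv {x : ℝ} (hx : |x| < 1) (h0 : x ≠ 0) :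
    HasSum (fun n : ℕ => x ^ n / ((n : ℝ) + 1)) (-Real.log (1 - x) / x) := by
  have h := Real.hasSum_pow_div_log_of_abs_lt_one hx
  have := h.mul_left x⁻¹
  have heq : (fun n : ℕ => x⁻¹ * (x ^ (n + 1) / ((n : ℝ) + 1))) =
      (fun n : ℕ => x ^ n / ((n : ℝ) + 1)) := by
    funext n
    field_simp [pow_succ]
    ring
  rw [heq] at this
  rw [show -Real.log (1 - x) / x = x⁻¹ * -Real.log (1 - x) by ring]
  exact this

lemma hasDerivAt_li2 {x : ℝ} (hx : |x| < 1) :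
    HasDerivAt Li2 (∑' n : ℕ, x ^ n / ((n : ℝ) + 1)) x := by
  set r : ℝ := (1 + |x|) / 2 with hr
  have hr0 : 0 ≤ r := by positivity
  have hr1 : r < 1 := by rw [hr]; linarith
  have hxr : |x| < r := by rw [hr]; linarith
  have hmem : x ∈ Ioo (-r) r := abs_lt.mp hxr
  refine hasDerivAt_tsum_of_isPreconnected
    (u := fun n : ℕ => r ^ n)
    (summable_geometric_of_lt_one hr0 hr1) isOpen_Ioo (convex_Ioo _ _).isPreconnected
    (g := fun n y => y ^ (n + 1) / ((n : ℝ) + 1) ^ 2)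
    (g' := fun n y => y ^ n / ((n : ℝ) + 1))
    (fun n y hy => ?_) (fun n y hy => ?_) hmem ?_ hmem
  · have h := (hasDerivAt_pow (n + 1) y).div_const (((n : ℝ) + 1) ^ 2)
    refine HasDerivAt.congr_deriv h (Eq.symm ?_)
    push_cast
    field_simp
  · have hyr : |y| < r := abs_lt.mpr hy
    rw [norm_eq_abs, abs_div, abs_pow]
    have h2 : (1:ℝ) ≤ |(n : ℝ) + 1| := by
      rw [abs_of_pos (by positivity)]; linarith [Nat.cast_nonneg (α := ℝ) n]
    calc |y| ^ n / |(n : ℝ) + 1| ≤ |y| ^ n / 1 := by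
          apply div_le_div_of_nonneg_left (pow_nonneg (abs_nonneg y) n) one_pos h2
      _ = |y| ^ n := by ring
      _ ≤ r ^ n := pow_le_pow_left₀ (abs_nonneg y) hyr.le n
  · exact summable_li2 (le_of_lt (hxr.trans hr1))

lemma hasDerivAt_li2' {x : ℝ} (hx : |x| < 1) (h0 : x ≠ 0) :
    HasDerivAt Li2 (-Real.log (1 - x) / x) x := by
  have := hasDerivAt_li2 hx
  rwa [(hasSum_li2_deriv hx h0).tsum_eq] at this

lemma continuousAt_li2 {x : ℝ} (hx : |x| < 1) : ContinuousAt Li2 x :=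
  (hasDerivAt_li2 hx).continuousAt

lemma tendsto_li2_one : Tendsto Li2 (𝓝[<] (1:ℝ)) (𝓝 (π ^ 2 / 6)) := by
  have hb : Tendsto (fun n : ℕ => ∑ i ∈ Finset.range n, (1:ℝ) / (i : ℝ) ^ 2) atTop
      (𝓝 (π ^ 2 / 6)) := hasSum_zeta_two.tendsto_sum_nat
  have habel := Real.tendsto_tsum_powerSeries_nhdsWithin_lt hb
  refine habel.congr' ?_
  filter_upwards [Ioo_mem_nhdsLT_of_mem (by norm_num : (1:ℝ) ∈ Ioc (-1) 1)] with y hy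
  have hy1 : |y| < 1 := abs_lt.mpr ⟨hy.1, hy.2⟩
  have hsum : Summable (fun n : ℕ => (1:ℝ) / (n : ℝ) ^ 2 * y ^ n) := by
    refine Summable.of_norm_bounded (summable_geometric_of_lt_one (abs_nonneg y) hy1)
      (fun n => ?_)
    rw [norm_eq_abs, abs_mul, abs_pow]
    rcases n with _ | m
    · simp
    · have h1 : |(1:ℝ) / ((m:ℝ) + 1) ^ 2| ≤ 1 := by
        rw [abs_of_nonneg (by positivity)]
        rw [div_le_one (by positivity)]
        nlinarith [Nat.cast_nonneg (α := ℝ) m]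
      push_cast
      calc |(1:ℝ) / ((m:ℝ) + 1) ^ 2| * |y| ^ (m+1) ≤ 1 * |y| ^ (m+1) := by
            exact mul_le_mul_of_nonneg_right h1 (pow_nonneg (abs_nonneg y) _)
        _ = |y| ^ (m+1) := one_mul _
  rw [Summable.tsum_eq_zero_add hsum]
  have h0 : (1:ℝ) / ((0:ℕ):ℝ) ^ 2 * y ^ 0 = 0 := by norm_num
  rw [h0, zero_add]
  show (∑' n : ℕ, (1:ℝ) / ((n+1 : ℕ):ℝ) ^ 2 * y ^ (n+1)) = Li2 y
  unfold Li2
  congr 1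
  funext n
  push_cast
  rw [div_mul_eq_mul_div, one_mul]

lemma eq_of_hasDerivAt_zero {f : ℝ → ℝ} {s : Set ℝ} (hs : Convex ℝ s) (ho : IsOpen s)
    (hf : ∀ x ∈ s, HasDerivAt f 0 x) {x y : ℝ} (hx : x ∈ s) (hy : y ∈ s) : f x = f y := by
  refine hs.is_const_of_fderivWithin_eq_zero
    (fun z hz => (hf z hz).differentiableAt.differentiableWithinAt) (fun z hz => ?_) hx hy
  rw [fderivWithin_of_isOpen ho hz, (hf z hz).hasFDerivAt.fderiv]
  ext t
  simp

lemma tendsto_log_mul_log_one_sub :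
    Tendsto (fun x : ℝ => Real.log x * Real.log (1 - x)) (𝓝[>] 0) (𝓝 0) := by
  have h1 : Tendsto (fun x : ℝ => Real.log x * x) (𝓝[>] (0:ℝ)) (𝓝 0) := by
    have := tendsto_log_mul_rpow_nhdsGT_zero one_pos
    refine this.congr' ?_
    filter_upwards [self_mem_nhdsWithin] with x hx
    rw [Real.rpow_one]
  have h2 : Tendsto (fun x : ℝ => |2 * (Real.log x * x)|) (𝓝[>] (0:ℝ)) (𝓝 0) := by
    have := (h1.const_mul 2).abs
    simpa using this
  refine squeeze_zero_norm' ?_ h2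
  filter_upwards [Ioo_mem_nhdsGT_of_mem (⟨le_refl 0, by norm_num⟩ : (0:ℝ) ∈ Ico 0 (1/2))]
    with x hx
  have hx0 : 0 < x := hx.1
  have hx2 : x < 1/2 := hx.2
  have h1x : (0:ℝ) < 1 - x := by linarith
  have hlogneg : Real.log (1 - x) ≤ 0 := Real.log_nonpos (by linarith) (by linarith)
  have hlb : 1 - (1 - x)⁻¹ ≤ Real.log (1 - x) := Real.one_sub_inv_le_log_of_pos h1x
  have hkey : |Real.log (1 - x)| ≤ 2 * x := by
    rw [abs_of_nonpos hlogneg]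
    nlinarith [mul_inv_cancel₀ (ne_of_gt h1x), hlb]
  rw [norm_eq_abs, abs_mul, abs_mul, abs_mul, abs_of_pos hx0,
    abs_of_pos (by norm_num : (0:ℝ) < 2)]
  nlinarith [hkey, abs_nonneg (Real.log x)]

lemma li2_dup {x : ℝ} (hx : |x| ≤ 1) : Li2 x + Li2 (-x) = Li2 (x^2) / 2 := by
  have hx' : |(-x)| ≤ 1 := by rwa [abs_neg]
  have hx2 : |x^2| ≤ 1 := by
    rw [abs_pow]
    exact pow_le_one₀ (abs_nonneg x) hx
  have hadd := (hasSum_li2 hx).add (hasSum_li2 hx')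
  set F : ℕ → ℝ := fun n => x ^ (n+1) / ((n:ℝ)+1)^2 + (-x) ^ (n+1) / ((n:ℝ)+1)^2 with hF
  have hinj : Function.Injective (fun m : ℕ => 2*m+1) := by
    intro a b h; simp only at h; omega
  have hzero : ∀ n : ℕ, n ∉ Set.range (fun m : ℕ => 2*m+1) → F n = 0 := by
    intro n hn
    have heven : Even n := by
      by_contra hodd
      rw [Nat.not_even_iff_odd] at hodd
      obtain ⟨m, hm⟩ := hodd
      exact hn ⟨m, by simp [hm]⟩
    have hodd : Odd (n+1) := Even.add_one heven
    simp only [hF, Odd.neg_pow hodd]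
    ring
  have h1 : HasSum (F ∘ (fun m : ℕ => 2*m+1)) (Li2 x + Li2 (-x)) :=
    (hinj.hasSum_iff hzero).mpr hadd
  have h2 : HasSum (fun m : ℕ => (x^2) ^ (m+1) / ((m:ℝ)+1)^2 / 2) (Li2 (x^2) / 2) :=
    (hasSum_li2 hx2).div_const 2
  have heq : (F ∘ (fun m : ℕ => 2*m+1)) = fun m : ℕ => (x^2) ^ (m+1) / ((m:ℝ)+1)^2 / 2 := by
    funext m
    simp only [hF, Function.comp_apply]
    have hodd2 : Even (2*m+1+1) := by exact ⟨m+1, by omega⟩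
    rw [Even.neg_pow hodd2]
    push_cast
    rw [← pow_mul]
    have : 2 * (m+1) = 2*m+1+1 := by omega
    rw [this]
    have hne : ((2*m : ℕ) : ℝ) + 1 + 1 ≠ 0 := by positivity
    field_simp
    ring
  rw [heq] at h1
  exact h1.unique h2

lemma li2_landen {x : ℝ} (hx : x ∈ Ioo (-1:ℝ) 0) :
    Li2 x + Li2 (x/(x-1)) + (Real.log (1-x))^2/2 = 0 := by
  set G : ℝ → ℝ := fun t => Li2 t + Li2 (t/(t-1)) + (Real.log (1-t))^2/2 with hG
  have hderiv : ∀ t ∈ Ioo (-1:ℝ) 0, HasDerivAt G 0 t := by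
    intro t ht
    have ht1 : t - 1 < 0 := by linarith [ht.2]
    have ht1' : t - 1 ≠ 0 := ne_of_lt ht1
    have h1t : (0:ℝ) < 1 - t := by linarith
    have ht0 : t ≠ 0 := ne_of_lt ht.2
    have htabs : |t| < 1 := abs_lt.mpr ⟨ht.1, by linarith [ht.2]⟩
    set y := t/(t-1) with hy
    have hy0 : 0 < y := div_pos_of_neg_of_neg ht.2 ht1
    have hy1 : y < 1 := by
      rw [hy, div_lt_one_of_neg ht1]
      linarith
    have hyabs : |y| < 1 := abs_lt.mpr ⟨by linarith, hy1⟩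
    -- derivative of inner map t ↦ t/(t-1)
    have hinner : HasDerivAt (fun t : ℝ => t/(t-1)) (-1/(t-1)^2) t := by
      have := (hasDerivAt_id t).div ((hasDerivAt_id t).sub_const 1) ht1'
      refine HasDerivAt.congr_deriv this (Eq.symm ?_)
      simp only [id]
      field_simp
      ring
    have d1 : HasDerivAt Li2 (-Real.log (1 - t) / t) t := hasDerivAt_li2' htabs ht0
    have d2 : HasDerivAt (fun t : ℝ => Li2 (t/(t-1)))
        ((-Real.log (1 - y) / y) * (-1/(t-1)^2)) t :=
      (hasDerivAt_li2' hyabs (ne_of_gt hy0)).comp (h₂ := Li2) t hinner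
    have dlog : HasDerivAt (fun t : ℝ => Real.log (1-t)) (-(1-t)⁻¹) t := by
      have h := (Real.hasDerivAt_log (ne_of_gt h1t)).comp t
        ((hasDerivAt_const t (1:ℝ)).sub (hasDerivAt_id t))
      refine HasDerivAt.congr_deriv h (Eq.symm ?_)
      simp
    have d3 := (dlog.pow 2).div_const 2
    have htotal := (d1.add d2).add d3
    refine HasDerivAt.congr_deriv htotal (Eq.symm ?_)
    have h1y : 1 - y = (1-t)⁻¹ := by
      rw [hy]
      field_simp
      ring
    rw [h1y, Real.log_inv, hy]
    push_cast
    field_simp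
    ring
  -- G is constant on Ioo (-1) 0 and continuous at 0 with G 0 = 0
  have hc : ContinuousAt G 0 := by
    have c1 : ContinuousAt Li2 0 := continuousAt_li2 (by norm_num)
    have c2 : ContinuousAt (fun t : ℝ => t/(t-1)) 0 :=
      (continuousAt_id.div (continuousAt_id.sub continuousAt_const) (by norm_num))
    have c3 : ContinuousAt (fun t : ℝ => Li2 (t/(t-1))) 0 := by
      have hLi : ContinuousAt Li2 ((0:ℝ)/((0:ℝ)-1)) := by
        have h0 : (0:ℝ)/((0:ℝ)-1) = 0 := by norm_num
        rw [h0]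
        exact continuousAt_li2 (by norm_num)
      exact ContinuousAt.comp (g := Li2) (f := fun t : ℝ => t/(t-1)) hLi c2
    have c4 : ContinuousAt (fun t : ℝ => (Real.log (1-t))^2/2) 0 := by
      have : ContinuousAt (fun t : ℝ => Real.log (1-t)) 0 :=
        (Real.continuousAt_log (by norm_num)).comp
          (continuousAt_const.sub continuousAt_id)
      exact (this.pow 2).div_const 2
    exact (c1.add c3).add c4
  have hG0 : G 0 = 0 := by
    simp [hG, li2_zero]
  have hlim : Tendsto G (𝓝[<] (0:ℝ)) (𝓝 (G 0)) := hc.continuousWithinAt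
  have hconst : ∀ᶠ t in 𝓝[<] (0:ℝ), G t = G x := by
    filter_upwards [Ioo_mem_nhdsLT_of_mem (⟨by norm_num, le_refl (0:ℝ)⟩ : (0:ℝ) ∈ Ioc (-1) 0)]
      with t ht
    exact eq_of_hasDerivAt_zero (convex_Ioo _ _) isOpen_Ioo hderiv ht hx
  have h2 : Tendsto (fun _ : ℝ => G x) (𝓝[<] (0:ℝ)) (𝓝 (G 0)) :=
    Filter.Tendsto.congr' hconst hlim
  have h3 : G x = G 0 := (tendsto_nhds_unique tendsto_const_nhds h2)
  show G x = 0
  rw [h3, hG0]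

lemma li2_euler {x : ℝ} (hx : x ∈ Ioo (0:ℝ) 1) :
    Li2 x + Li2 (1-x) + Real.log x * Real.log (1-x) = π^2/6 := by
  set F : ℝ → ℝ := fun t => Li2 t + Li2 (1-t) + Real.log t * Real.log (1-t) with hF
  have hderiv : ∀ t ∈ Ioo (0:ℝ) 1, HasDerivAt F 0 t := by
    intro t ht
    have ht0 : 0 < t := ht.1
    have ht1 : t < 1 := ht.2
    have h1t : (0:ℝ) < 1 - t := by linarith
    have htabs : |t| < 1 := abs_lt.mpr ⟨by linarith, ht1⟩
    have h1tabs : |1 - t| < 1 := abs_lt.mpr ⟨by linarith, by linarith⟩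
    have hsub : HasDerivAt (fun t : ℝ => 1 - t) (-1) t := by
      exact ((hasDerivAt_const t (1:ℝ)).sub (hasDerivAt_id t)).congr_deriv (by norm_num)
    have d1 : HasDerivAt Li2 (-Real.log (1 - t) / t) t := hasDerivAt_li2' htabs (ne_of_gt ht0)
    have d2 : HasDerivAt (fun t : ℝ => Li2 (1-t))
        ((-Real.log (1 - (1-t)) / (1-t)) * (-1)) t :=
      (hasDerivAt_li2' h1tabs (ne_of_gt h1t)).comp t hsub
    have dlog1 : HasDerivAt (fun t : ℝ => Real.log t) t⁻¹ t := Real.hasDerivAt_log (ne_of_gt ht0)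
    have dlog2 : HasDerivAt (fun t : ℝ => Real.log (1-t)) ((1-t)⁻¹ * (-1)) t :=
      (Real.hasDerivAt_log (ne_of_gt h1t)).comp t hsub
    have d3 : HasDerivAt (fun t : ℝ => Real.log t * Real.log (1-t))
        (t⁻¹ * Real.log (1-t) + Real.log t * ((1-t)⁻¹ * (-1))) t := dlog1.mul dlog2
    have htotal := (d1.add d2).add d3
    refine HasDerivAt.congr_deriv htotal (Eq.symm ?_)
    rw [show (1 : ℝ) - (1 - t) = t by ring]
    field_simp
    ring
  have hmem : ∀ᶠ t in 𝓝[<] (1:ℝ), t ∈ Ioo (0:ℝ) 1 :=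
    Ioo_mem_nhdsLT_of_mem (⟨by norm_num, le_refl (1:ℝ)⟩ : (1:ℝ) ∈ Ioc 0 1)
  have hconst : ∀ᶠ t in 𝓝[<] (1:ℝ), F t = F x := by
    filter_upwards [hmem] with t ht
    exact eq_of_hasDerivAt_zero (convex_Ioo _ _) isOpen_Ioo hderiv ht hx
  have hlim : Tendsto F (𝓝[<] (1:ℝ)) (𝓝 (π^2/6)) := by
    have l1 : Tendsto Li2 (𝓝[<] (1:ℝ)) (𝓝 (π^2/6)) := tendsto_li2_one
    have lsub : Tendsto (fun t : ℝ => 1 - t) (𝓝[<] (1:ℝ)) (𝓝[>] (0:ℝ)) := by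
      apply tendsto_nhdsWithin_of_tendsto_nhds_of_eventually_within
      · have : Tendsto (fun t : ℝ => 1 - t) (𝓝 (1:ℝ)) (𝓝 0) :=
          Continuous.tendsto' (continuous_const.sub continuous_id) 1 0 (by norm_num)
        exact this.mono_left nhdsWithin_le_nhds
      · filter_upwards [self_mem_nhdsWithin] with t ht
        simp only [mem_Iio] at ht
        simp [mem_Ioi]
        linarith
    have l2 : Tendsto (fun t : ℝ => Li2 (1-t)) (𝓝[<] (1:ℝ)) (𝓝 0) := by
      have hcont : Tendsto Li2 (𝓝 (0:ℝ)) (𝓝 (Li2 0)) := continuousAt_li2 (by norm_num)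
      rw [li2_zero] at hcont
      exact hcont.comp (lsub.mono_right nhdsWithin_le_nhds)
    have l3 : Tendsto (fun t : ℝ => Real.log t * Real.log (1-t)) (𝓝[<] (1:ℝ)) (𝓝 0) := by
      have hcomp := tendsto_log_mul_log_one_sub.comp lsub
      refine hcomp.congr (fun t => ?_)
      simp only [Function.comp_apply]
      rw [show (1 : ℝ) - (1 - t) = t by ring, mul_comm]
    have := (l1.add l2).add l3
    simpa using this
  have h2 : Tendsto (fun _ : ℝ => F x) (𝓝[<] (1:ℝ)) (𝓝 (π^2/6)) :=
    Filter.Tendsto.congr' hconst hlim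
  show F x = π^2/6
  exact tendsto_nhds_unique tendsto_const_nhds h2

lemma sqrt5_lt : 2 < Real.sqrt 5 ∧ Real.sqrt 5 < 3 := by
  have hsq : Real.sqrt 5 ^ 2 = 5 := Real.sq_sqrt (by norm_num)
  have hnn : 0 ≤ Real.sqrt 5 := Real.sqrt_nonneg 5
  constructor <;> nlinarith

lemma li2_golden :
    Li2 (((Real.sqrt 5 - 1)/2)^2)
      = π^2/15 - (Real.log ((Real.sqrt 5 - 1)/2))^2 := by
  obtain ⟨h2, h3⟩ := sqrt5_lt
  have hsq5 : Real.sqrt 5 ^ 2 = 5 := Real.sq_sqrt (by norm_num)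
  set a : ℝ := (Real.sqrt 5 - 1)/2 with ha
  have ha0 : 0 < a := by rw [ha]; linarith
  have ha1 : a < 1 := by rw [ha]; linarith
  have hgold : a^2 = 1 - a := by rw [ha]; nlinarith
  have hainv : 1 + a = a⁻¹ := by
    have : a * (1 + a) = 1 := by nlinarith
    field_simp
    nlinarith
  set L : ℝ := Real.log a with hL
  -- Euler reflection at a
  have e1 : Li2 a + Li2 (a^2) + 2 * L^2 = π^2/6 := by
    have h := li2_euler (x := a) ⟨ha0, ha1⟩
    rw [← hgold] at h
    rw [show Real.log (a^2) = 2 * L by rw [hL, Real.log_pow]; norm_num] at h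
    linarith [h]
  -- Landen at -a
  have e2 : Li2 (-a) + Li2 (a^2) + L^2/2 = 0 := by
    have h := li2_landen (x := -a) ⟨by linarith, by linarith⟩
    have hfrac : (-a)/(-a-1) = a^2 := by
      have h1 : -a - 1 ≠ 0 := by linarith
      field_simp
      nlinarith
    rw [hfrac] at h
    have hlog : Real.log (1 - (-a)) = -L := by
      rw [show (1 : ℝ) - (-a) = 1 + a by ring, hainv, Real.log_inv]
    rw [hlog] at h
    nlinarith [h]
  -- duplication at a
  have e3 : Li2 a + Li2 (-a) = Li2 (a^2) / 2 :=
    li2_dup (by rw [abs_of_pos ha0]; linarith)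
  linarith

noncomputable def ramanS (x : ℝ) : ℝ :=
  ∑' m : ℕ, oddHarmonic (m + 1) * x ^ (2 * m + 1) / (2 * (m : ℝ) + 1)

lemma oddHarmonic_nonneg (k : ℕ) : 0 ≤ oddHarmonic k :=
  Finset.sum_nonneg (fun j _ => by positivity)

lemma oddHarmonic_le (k : ℕ) : oddHarmonic k ≤ k := by
  calc oddHarmonic k ≤ ∑ _j ∈ Finset.range k, (1:ℝ) := by
        refine Finset.sum_le_sum (fun j _ => ?_)
        rw [div_le_one (by positivity)]
        linarith [Nat.cast_nonneg (α := ℝ) j]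
    _ = k := by simp

lemma summable_aux {r : ℝ} (hr : |r| < 1) : Summable (fun m : ℕ => ((m:ℝ)+1) * r^m) := by
  have h1 : Summable (fun m : ℕ => (m:ℝ)^1 * r^m) :=
    summable_pow_mul_geometric_of_norm_lt_one 1 (by rwa [Real.norm_eq_abs])
  have h2 : Summable (fun m : ℕ => r^m) :=
    summable_geometric_of_norm_lt_one (by rwa [Real.norm_eq_abs])
  refine (h1.add h2).congr (fun m => ?_)
  push_cast
  ring

lemma bound_term {m : ℕ} {y r : ℝ} (hyr : |y| < r) :
    ‖oddHarmonic (m + 1) * y ^ (2 * m)‖ ≤ ((m:ℝ)+1) * (r^2)^m := by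
  have hr0 : 0 ≤ r := le_trans (abs_nonneg y) hyr.le
  rw [norm_eq_abs, abs_mul, abs_pow, abs_of_nonneg (oddHarmonic_nonneg _)]
  have h1 : oddHarmonic (m+1) ≤ (m:ℝ)+1 := by
    have := oddHarmonic_le (m+1)
    push_cast at this
    linarith
  have h2 : |y| ^ (2*m) ≤ (r^2)^m := by
    rw [pow_mul]
    have hsq : |y|^2 ≤ r^2 := by nlinarith [abs_nonneg y]
    exact pow_le_pow_left₀ (sq_nonneg _) hsq m
  exact mul_le_mul h1 h2 (pow_nonneg (abs_nonneg y) _) (by positivity)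

lemma summable_ramanS {x : ℝ} (hx : |x| < 1) :
    Summable (fun m : ℕ => oddHarmonic (m + 1) * x ^ (2 * m + 1) / (2 * (m : ℝ) + 1)) := by
  set r : ℝ := (1 + |x|) / 2 with hr
  have hr1 : r < 1 := by rw [hr]; linarith
  have hxr : |x| < r := by rw [hr]; linarith
  have hrr : |r^2| < 1 := by
    rw [abs_of_nonneg (by positivity)]
    nlinarith [abs_nonneg x]
  refine Summable.of_norm_bounded (summable_aux hrr) (fun m => ?_)
  refine le_trans ?_ (bound_term (m := m) hxr)
  rw [norm_eq_abs, norm_eq_abs, abs_div, abs_mul, abs_mul, abs_pow, abs_pow,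
    abs_of_nonneg (oddHarmonic_nonneg _)]
  have hd : (1:ℝ) ≤ |2 * (m:ℝ) + 1| := by
    rw [abs_of_pos (by positivity)]
    linarith [Nat.cast_nonneg (α := ℝ) m]
  have e1 : |x|^(2*m+1) ≤ |x|^(2*m) :=
    pow_le_pow_of_le_one (abs_nonneg x) hx.le (by omega)
  calc oddHarmonic (m+1) * |x|^(2*m+1) / |2*(m:ℝ)+1|
      ≤ oddHarmonic (m+1) * |x|^(2*m+1) :=
        div_le_self (mul_nonneg (oddHarmonic_nonneg _) (by positivity)) hd
    _ ≤ oddHarmonic (m+1) * |x|^(2*m) :=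
        mul_le_mul_of_nonneg_left e1 (oddHarmonic_nonneg _)

lemma hasDerivAt_ramanS {x : ℝ} (hx : |x| < 1) :
    HasDerivAt ramanS (∑' m : ℕ, oddHarmonic (m + 1) * x ^ (2 * m)) x := by
  set r : ℝ := (1 + |x|) / 2 with hr
  have hr1 : r < 1 := by rw [hr]; linarith
  have hxr : |x| < r := by rw [hr]; linarith
  have hrr : |r^2| < 1 := by
    rw [abs_of_nonneg (by positivity)]
    nlinarith [abs_nonneg x]
  have hmem : x ∈ Ioo (-r) r := abs_lt.mp hxr
  refine hasDerivAt_tsum_of_isPreconnected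
    (u := fun m : ℕ => ((m:ℝ)+1) * (r^2)^m)
    (summable_aux hrr) isOpen_Ioo (convex_Ioo _ _).isPreconnected
    (g := fun m y => oddHarmonic (m + 1) * y ^ (2 * m + 1) / (2 * (m : ℝ) + 1))
    (g' := fun m y => oddHarmonic (m + 1) * y ^ (2 * m))
    (fun m y _ => ?_) (fun m y hy => bound_term (abs_lt.mpr hy)) hmem
    (summable_ramanS (hxr.trans hr1)) hmem
  have h := ((hasDerivAt_pow (2*m+1) y).const_mul (oddHarmonic (m+1))).div_const
    (2 * (m:ℝ) + 1)
  refine HasDerivAt.congr_deriv h (Eq.symm ?_)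
  have hne : (2:ℝ) * (m:ℝ) + 1 ≠ 0 := by positivity
  have hexp : 2*m+1-1 = 2*m := by omega
  rw [hexp]
  push_cast
  field_simp

lemma hasSum_deriv_ramanS {x : ℝ} (hx0 : 0 < x) (hx1 : x < 1) :
    HasSum (fun m : ℕ => oddHarmonic (m + 1) * x ^ (2 * m))
      (((Real.log (1+x) - Real.log (1-x))/(2*x)) * (1/(1-x^2))) := by
  have hxabs : |x| < 1 := abs_lt.mpr ⟨by linarith, hx1⟩
  have hx2 : x^2 < 1 := by nlinarith
  set f : ℕ → ℝ := fun j => x^(2*j) / (2*(j:ℝ)+1) with hf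
  set g : ℕ → ℝ := fun i => x^(2*i) with hg
  have hfn : Summable (fun j => ‖f j‖) := by
    refine Summable.of_nonneg_of_le (fun j => norm_nonneg _) (fun j => ?_)
      (summable_geometric_of_lt_one (by positivity) hx2)
    rw [hf, norm_eq_abs, abs_div, abs_pow, abs_of_pos (by positivity : (0:ℝ) < 2*(j:ℝ)+1),
      abs_of_pos hx0]
    calc x^(2*j) / (2*(j:ℝ)+1) ≤ x^(2*j) :=
          div_le_self (by positivity) (by linarith [Nat.cast_nonneg (α := ℝ) j])
      _ = (x^2)^j := by rw [← pow_mul]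
  have hgn : Summable (fun i => ‖g i‖) := by
    refine Summable.of_nonneg_of_le (fun i => norm_nonneg _) (fun i => ?_)
      (summable_geometric_of_lt_one (by positivity) hx2)
    rw [hg, norm_eq_abs, abs_pow, abs_of_pos hx0, ← pow_mul]
  have hfsum : HasSum f ((Real.log (1+x) - Real.log (1-x))/(2*x)) := by
    have h := Real.hasSum_log_sub_log_of_abs_lt_one hxabs
    have h2 := h.mul_left (2*x)⁻¹
    have heq : (fun k : ℕ => (2*x)⁻¹ * ((2:ℝ) * (1/(2*(k:ℝ)+1)) * x^(2*k+1))) = f := by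
      funext k
      rw [hf]
      have hne : (2:ℝ)*(k:ℝ)+1 ≠ 0 := by positivity
      field_simp [pow_succ]
      ring
    rw [heq, inv_mul_eq_div] at h2
    exact h2
  have hgsum : HasSum g (1/(1-x^2)) := by
    have h := hasSum_geometric_of_lt_one (by positivity : (0:ℝ) ≤ x^2) hx2
    rw [← one_div] at h
    refine h.congr_fun (fun i => ?_)
    rw [hg, ← pow_mul]
  have hcauchy := tsum_mul_tsum_eq_tsum_sum_range_of_summable_norm hfn hgn
  have hsumm : Summable (fun n : ℕ => ∑ k ∈ Finset.range (n+1), f k * g (n-k)) :=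
    (summable_norm_sum_mul_range_of_summable_norm hfn hgn).of_norm
  have hterm : ∀ n : ℕ, ∑ k ∈ Finset.range (n+1), f k * g (n-k)
      = oddHarmonic (n+1) * x^(2*n) := by
    intro n
    rw [oddHarmonic, Finset.sum_mul]
    refine Finset.sum_congr rfl (fun k hk => ?_)
    have hk' : k ≤ n := by
      have := Finset.mem_range.mp hk
      omega
    show x^(2*k) / (2*(k:ℝ)+1) * x^(2*(n-k)) = 1 / (2 * (k : ℝ) + 1) * x ^ (2*n)
    rw [div_mul_eq_mul_div, ← pow_add, show 2*k + 2*(n-k) = 2*n by omega]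
    ring
  have hS := hsumm.hasSum
  simp_rw [hterm] at hS hcauchy
  rw [hfsum.tsum_eq, hgsum.tsum_eq] at hcauchy
  rw [← hcauchy] at hS
  exact hS

lemma tendsto_log_mul_log_one_add :
    Tendsto (fun x : ℝ => Real.log x * Real.log (1 + x)) (𝓝[>] 0) (𝓝 0) := by
  have h1 : Tendsto (fun x : ℝ => Real.log x * x) (𝓝[>] (0:ℝ)) (𝓝 0) := by
    have := tendsto_log_mul_rpow_nhdsGT_zero one_pos
    refine this.congr' ?_
    filter_upwards [self_mem_nhdsWithin] with x hx
    rw [Real.rpow_one]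
  have h2 : Tendsto (fun x : ℝ => |2 * (Real.log x * x)|) (𝓝[>] (0:ℝ)) (𝓝 0) := by
    have := (h1.const_mul 2).abs
    simpa using this
  refine squeeze_zero_norm' ?_ h2
  filter_upwards [Ioo_mem_nhdsGT_of_mem (⟨le_refl 0, by norm_num⟩ : (0:ℝ) ∈ Ico 0 (1/2))]
    with x hx
  have hx0 : 0 < x := hx.1
  have hpos : (0:ℝ) < 1 + x := by linarith
  have hub : Real.log (1 + x) ≤ x := by
    have := Real.log_le_sub_one_of_pos hpos
    linarith
  have hlb : 0 ≤ Real.log (1 + x) := Real.log_nonneg (by linarith)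
  have hkey : |Real.log (1 + x)| ≤ 2 * x := by
    rw [abs_of_nonneg hlb]
    linarith
  rw [norm_eq_abs, abs_mul, abs_mul, abs_mul, abs_of_pos hx0,
    abs_of_pos (by norm_num : (0:ℝ) < 2)]
  nlinarith [hkey, abs_nonneg (Real.log x)]

noncomputable def ramanC (t : ℝ) : ℝ :=
  ((Real.log (1+t) - Real.log (1-t))/2)^2/2 + π^2/12
    + ((Real.log (1+t) - Real.log (1-t))/2) * Real.log (1 - (1-t)/(1+t))
    - Li2 ((1-t)/(1+t)) / 2

lemma ramanS_eq_ramanC {x : ℝ} (hx : x ∈ Ioo (0:ℝ) 1) : ramanS x = ramanC x := by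
  set H : ℝ → ℝ := fun t => ramanS t - ramanC t with hH
  have hderiv : ∀ t ∈ Ioo (0:ℝ) 1, HasDerivAt H 0 t := by
    intro t ht
    have ht0 : 0 < t := ht.1
    have ht1 : t < 1 := ht.2
    have h1p : (0:ℝ) < 1 + t := by linarith
    have h1m : (0:ℝ) < 1 - t := by linarith
    have htabs : |t| < 1 := abs_lt.mpr ⟨by linarith, ht1⟩
    have hw0 : 0 < (1-t)/(1+t) := div_pos h1m h1p
    have hw1 : (1-t)/(1+t) < 1 := by
      rw [div_lt_one h1p]
      linarith
    have hwabs : |(1-t)/(1+t)| < 1 := abs_lt.mpr ⟨by linarith, hw1⟩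
    have h1w : (0:ℝ) < 1 - (1-t)/(1+t) := by linarith
    have dS : HasDerivAt ramanS
        (((Real.log (1+t) - Real.log (1-t))/(2*t)) * (1/(1-t^2))) t := by
      have h := hasDerivAt_ramanS htabs
      rwa [(hasSum_deriv_ramanS ht0 ht1).tsum_eq] at h
    have dlp : HasDerivAt (fun s : ℝ => Real.log (1+s)) ((1+t)⁻¹ * (0+1)) t :=
      (Real.hasDerivAt_log (ne_of_gt h1p)).comp t
        ((hasDerivAt_const t (1:ℝ)).add (hasDerivAt_id t))
    have dlm : HasDerivAt (fun s : ℝ => Real.log (1-s)) ((1-t)⁻¹ * (0-1)) t :=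
      (Real.hasDerivAt_log (ne_of_gt h1m)).comp t
        ((hasDerivAt_const t (1:ℝ)).sub (hasDerivAt_id t))
    have dA := (dlp.sub dlm).div_const 2
    have dw : HasDerivAt (fun s : ℝ => (1-s)/(1+s))
        (((0-1) * (1+t) - (1-t) * (0+1))/(1+t)^2) t :=
      ((hasDerivAt_const t (1:ℝ)).sub (hasDerivAt_id t)).div
        ((hasDerivAt_const t (1:ℝ)).add (hasDerivAt_id t)) (ne_of_gt h1p)
    have dlogw : HasDerivAt (fun s : ℝ => Real.log (1 - (1-s)/(1+s)))
        ((1 - (1-t)/(1+t))⁻¹ * (0 - ((0-1) * (1+t) - (1-t) * (0+1))/(1+t)^2)) t :=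
      (Real.hasDerivAt_log (ne_of_gt h1w)).comp (h₂ := Real.log) t ((hasDerivAt_const t (1:ℝ)).sub dw)
    have dLiw : HasDerivAt (fun s : ℝ => Li2 ((1-s)/(1+s)))
        ((-Real.log (1 - (1-t)/(1+t)) / ((1-t)/(1+t)))
          * (((0-1) * (1+t) - (1-t) * (0+1))/(1+t)^2)) t :=
      (hasDerivAt_li2' hwabs (ne_of_gt hw0)).comp (h₂ := Li2) t dw
    have dC := ((((dA.pow 2).div_const 2).add (hasDerivAt_const t (π^2/12))).add
      (dA.mul dlogw)).sub (dLiw.div_const 2)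
    have total := dS.sub dC
    refine HasDerivAt.congr_deriv total (Eq.symm ?_)
    simp only [Pi.sub_apply]
    have hne1 : (1:ℝ) + t ≠ 0 := ne_of_gt h1p
    have hne2 : (1:ℝ) - t ≠ 0 := ne_of_gt h1m
    have hne3 : t ≠ 0 := ne_of_gt ht0
    have hnew : (1:ℝ) - (1-t)/(1+t) ≠ 0 := ne_of_gt h1w
    generalize Real.log (1 - (1-t)/(1+t)) = l3
    generalize Real.log (1+t) = l1
    generalize Real.log (1-t) = l2
    have hne4 : (1:ℝ) - t^2 ≠ 0 := by nlinarith
    have hne5 : (1:ℝ) + t - (1 - t) ≠ 0 := ne_of_gt (by linarith)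
    field_simp
    ring
  have hc0 : Tendsto ramanS (𝓝[>] (0:ℝ)) (𝓝 0) := by
    have hc : ContinuousAt ramanS 0 := (hasDerivAt_ramanS (by norm_num)).continuousAt
    have h0 : ramanS 0 = 0 := by
      rw [ramanS]
      convert tsum_zero with m
      rw [zero_pow (by omega : 2*m+1 ≠ 0)]
      ring
    have h2 : Tendsto ramanS (𝓝[>] (0:ℝ)) (𝓝 (ramanS 0)) :=
      hc.continuousWithinAt (s := Ioi (0:ℝ))
    rwa [h0] at h2
  have cA : Tendsto (fun t : ℝ => (Real.log (1+t) - Real.log (1-t))/2) (𝓝[>] (0:ℝ)) (𝓝 0) := by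
    have c1 : ContinuousAt (fun t : ℝ => (Real.log (1+t) - Real.log (1-t))/2) 0 := by
      apply ContinuousAt.div_const
      apply ContinuousAt.sub
      · exact (Real.continuousAt_log (by norm_num)).comp (continuousAt_const.add continuousAt_id)
      · exact (Real.continuousAt_log (by norm_num)).comp (continuousAt_const.sub continuousAt_id)
    have hz : ((Real.log (1+(0:ℝ)) - Real.log (1-(0:ℝ)))/2) = 0 := by norm_num
    have h2 : Tendsto (fun t : ℝ => (Real.log (1+t) - Real.log (1-t))/2) (𝓝[>] (0:ℝ))
        (𝓝 ((Real.log (1+(0:ℝ)) - Real.log (1-(0:ℝ)))/2)) := c1.continuousWithinAt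
    rwa [hz] at h2
  have clog1p : Tendsto (fun t : ℝ => Real.log (1+t)) (𝓝[>] (0:ℝ)) (𝓝 0) := by
    have c1 : ContinuousAt (fun t : ℝ => Real.log (1+t)) 0 :=
      (Real.continuousAt_log (by norm_num)).comp (continuousAt_const.add continuousAt_id)
    have hz : Real.log (1+(0:ℝ)) = 0 := by norm_num
    have h2 : Tendsto (fun t : ℝ => Real.log (1+t)) (𝓝[>] (0:ℝ))
        (𝓝 (Real.log (1+(0:ℝ)))) := c1.continuousWithinAt
    rwa [hz] at h2
  have t1 : Tendsto (fun t : ℝ => ((Real.log (1+t) - Real.log (1-t))/2)^2/2)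
      (𝓝[>] (0:ℝ)) (𝓝 0) := by
    have h := (cA.mul cA).div_const 2
    have h2 : ((0:ℝ) * 0)/2 = 0 := by norm_num
    rw [h2] at h
    exact h.congr (fun t => by rw [pow_two])
  have t3 : Tendsto (fun t : ℝ => ((Real.log (1+t) - Real.log (1-t))/2)
      * Real.log (1 - (1-t)/(1+t))) (𝓝[>] (0:ℝ)) (𝓝 0) := by
    have heq : ∀ᶠ t in 𝓝[>] (0:ℝ),
        ((Real.log (1+t) - Real.log (1-t))/2) * Real.log 2
          + (Real.log (1+t) * Real.log t - Real.log (1-t) * Real.log t)/2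
          - ((Real.log (1+t) - Real.log (1-t))/2) * Real.log (1+t)
        = ((Real.log (1+t) - Real.log (1-t))/2) * Real.log (1 - (1-t)/(1+t)) := by
      filter_upwards [Ioo_mem_nhdsGT_of_mem (⟨le_refl 0, one_pos⟩ : (0:ℝ) ∈ Ico 0 1)]
        with t ht
      have ht0 : 0 < t := ht.1
      have h1p : (0:ℝ) < 1 + t := by linarith
      have hw : 1 - (1-t)/(1+t) = 2*t/(1+t) := by
        field_simp
        ring
      rw [hw, Real.log_div (by positivity) (ne_of_gt h1p),
        Real.log_mul (by norm_num) (ne_of_gt ht0)]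
      ring
    have hp1 : Tendsto (fun t : ℝ => Real.log (1+t) * Real.log t) (𝓝[>] (0:ℝ)) (𝓝 0) :=
      tendsto_log_mul_log_one_add.congr (fun t => mul_comm _ _)
    have hp2 : Tendsto (fun t : ℝ => Real.log (1-t) * Real.log t) (𝓝[>] (0:ℝ)) (𝓝 0) :=
      tendsto_log_mul_log_one_sub.congr (fun t => mul_comm _ _)
    have hrhs := ((cA.mul_const (Real.log 2)).add ((hp1.sub hp2).div_const 2)).sub
      (cA.mul clog1p)
    have hval : (0:ℝ) * Real.log 2 + ((0:ℝ) - 0)/2 - 0 * 0 = 0 := by norm_num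
    rw [hval] at hrhs
    exact Filter.Tendsto.congr' heq hrhs
  have t4 : Tendsto (fun t : ℝ => Li2 ((1-t)/(1+t)) / 2) (𝓝[>] (0:ℝ)) (𝓝 (π^2/12)) := by
    have hwten : Tendsto (fun t : ℝ => (1-t)/(1+t)) (𝓝[>] (0:ℝ)) (𝓝[<] (1:ℝ)) := by
      apply tendsto_nhdsWithin_of_tendsto_nhds_of_eventually_within
      · have hcw : ContinuousAt (fun t : ℝ => (1-t)/(1+t)) 0 :=
          ((continuousAt_const.sub continuousAt_id).div
            (continuousAt_const.add continuousAt_id) (by norm_num))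
        have h2 : Tendsto (fun t : ℝ => (1-t)/(1+t)) (𝓝 (0:ℝ)) (𝓝 1) := by
          have h3 := hcw.tendsto
          rwa [show ((1:ℝ)-0)/((1:ℝ)+0) = 1 by norm_num] at h3
        exact h2.mono_left nhdsWithin_le_nhds
      · filter_upwards [Ioo_mem_nhdsGT_of_mem (⟨le_refl 0, one_pos⟩ : (0:ℝ) ∈ Ico 0 1)]
          with t ht
        have h1p : (0:ℝ) < 1 + t := by linarith [ht.1]
        have : (1-t)/(1+t) < 1 := by
          rw [div_lt_one h1p]
          linarith [ht.1]
        simpa [mem_Iio]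
    have h := (tendsto_li2_one.comp hwten).div_const 2
    have hv : (π^2/6)/2 = π^2/12 := by ring
    rw [hv] at h
    exact h
  have hC0 : Tendsto ramanC (𝓝[>] (0:ℝ)) (𝓝 0) := by
    have hcomb := ((t1.add (tendsto_const_nhds (x := π^2/12))).add t3).sub t4
    have hval : (0:ℝ) + π^2/12 + 0 - π^2/12 = 0 := by ring
    rw [hval] at hcomb
    exact hcomb.congr (fun t => by rw [ramanC])
  have hHlim : Tendsto H (𝓝[>] (0:ℝ)) (𝓝 0) := by
    have := hc0.sub hC0
    rw [show (0:ℝ) - 0 = 0 by ring] at this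
    exact this
  have hconst : ∀ᶠ t in 𝓝[>] (0:ℝ), H t = H x := by
    filter_upwards [Ioo_mem_nhdsGT_of_mem (⟨le_refl 0, one_pos⟩ : (0:ℝ) ∈ Ico 0 1)]
      with t ht
    exact eq_of_hasDerivAt_zero (convex_Ioo _ _) isOpen_Ioo hderiv ht hx
  have h2 : Tendsto (fun _ : ℝ => H x) (𝓝[>] (0:ℝ)) (𝓝 0) :=
    Filter.Tendsto.congr' hconst hHlim
  have h3 : H x = 0 := tendsto_nhds_unique tendsto_const_nhds h2
  have h4 : ramanS x - ramanC x = 0 := h3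
  linarith

theorem ramanujan_val : ramanS (1/Real.sqrt 5) = π^2/20 := by
  have hsq5 : Real.sqrt 5 ^ 2 = 5 := Real.sq_sqrt (by norm_num)
  have hnn : 0 ≤ Real.sqrt 5 := Real.sqrt_nonneg 5
  have h2 : 2 < Real.sqrt 5 := by nlinarith
  have h3 : Real.sqrt 5 < 3 := by nlinarith
  have hs0 : (0:ℝ) < Real.sqrt 5 := by linarith
  set s : ℝ := Real.sqrt 5 with hs
  set x₀ : ℝ := 1/s with hx₀
  have hx0pos : 0 < x₀ := by positivity
  have hx0lt : x₀ < 1 := by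
    rw [hx₀, div_lt_one hs0]
    linarith
  have h1p : (0:ℝ) < 1 + x₀ := by linarith
  have h1m : (0:ℝ) < 1 - x₀ := by linarith
  set a : ℝ := (s - 1)/2 with ha
  have ha0 : 0 < a := by rw [ha]; linarith
  have ha1 : a < 1 := by rw [ha]; linarith
  have hgold : a^2 = 1 - a := by rw [ha]; nlinarith
  have hw : (1 - x₀)/(1 + x₀) = a^2 := by
    rw [hx₀, ha]
    field_simp
    nlinarith
  have hwinv : (1 + x₀)/(1 - x₀) = (a^2)⁻¹ := by
    rw [← hw, inv_div]
  have hA : Real.log (1+x₀) - Real.log (1-x₀) = -2 * Real.log a := by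
    rw [← Real.log_div (ne_of_gt h1p) (ne_of_gt h1m), hwinv, Real.log_inv, Real.log_pow]
    push_cast
    ring
  have hLi : Li2 (a^2) = π^2/15 - (Real.log a)^2 := by
    rw [ha, hs]
    exact li2_golden
  rw [ramanS_eq_ramanC ⟨hx0pos, hx0lt⟩]
  unfold ramanC
  rw [hw, hA, show (1:ℝ) - a^2 = a by linarith [hgold], hLi]
  ring

/-- Ramanujan's odd-harmonic sum at `x = 1/√5`:
`∑_{k≥1} h_k·(1/√5)^{2k−1}/(2k−1) = π²/20` (here the sum over `k ≥ 1` is indexed by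
`k = m + 1`, `m ≥ 0`, so that `2k − 1 = 2m + 1`). -/
theorem ramanujan_odd_harmonic_sum :
    (∑' m : ℕ, oddHarmonic (m + 1) * (1 / Real.sqrt 5)^(2 * m + 1) / (2 * (m : ℝ) + 1))
      = π^2 / 20 := by
  exact ramanujan_val
end
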